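/- arXiv:2108.12875 — 3 statements merged into one kernel-verified Lean document; each statement's English description precedes it below -/
import Mathlib

section
/- For points p₁, …, p_{n+1} in ℝⁿ, the mixed volume of the n+1 line segments conv{p̂ᵢ, e_{n+1}} ⊂ ℝ^{n+1}, where p̂ᵢ = (pᵢ, 0) is the embedding of pᵢ into ℝ^{n+1} and e_{n+1} is the last standard basis vector, equals |det[[1,…,1],[p₁,…,p_{n+1}]]|. -/
open MeasureTheory Pointwise

noncomputable def mixedVol {E : Type*} [AddCommMonoid E] [MeasureSpace E]
    (m : ℕ) (K : Fin m → Set E) : ℝ :=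
  ∑ S : Finset (Fin m), (-1 : ℝ) ^ (m - S.card) * (volume (∑ i ∈ S, K i)).toReal

noncomputable def emb (n m : ℕ) (p : EuclideanSpace ℝ (Fin n)) : EuclideanSpace ℝ (Fin m) :=
  WithLp.toLp 2 (fun i : Fin m => if h : (i : ℕ) < n then p ⟨i, h⟩ else 0)

noncomputable def simplexOf (n m : ℕ) (p : EuclideanSpace ℝ (Fin n)) :
    Set (EuclideanSpace ℝ (Fin m)) :=
  convexHull ℝ (insert (emb n m p)
    {x | ∃ j : Fin m, n ≤ (j : ℕ) ∧ x = EuclideanSpace.single j 1})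

/-- Sum of segments from the origin lies in the span of the generating vectors. -/
lemma sum_segment_subset_span {E : Type*} [NormedAddCommGroup E] [NormedSpace ℝ E]
    {ι : Type*} (v : ι → E) (S : Finset ι) :
    (∑ i ∈ S, segment ℝ 0 (v i)) ⊆ (Submodule.span ℝ (v '' S) : Set E) := by
  classical
  induction S using Finset.induction with
  | empty =>
    intro x hx
    simp only [Finset.sum_empty, Set.mem_zero] at hx
    simp [hx]
  | insert _ _ hnotmem ih =>
    rename_i a T
    rw [Finset.sum_insert hnotmem]
    intro x hx
    obtain ⟨y, hy, z, hz, rfl⟩ := Set.mem_add.1 hx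
    have hyspan : y ∈ Submodule.span ℝ (v '' (insert a T : Finset ι)) := by
      rw [segment_eq_image] at hy
      obtain ⟨t, _, rfl⟩ := hy
      simp only [smul_zero, zero_add]
      exact Submodule.smul_mem _ _ (Submodule.subset_span ⟨a, by simp, rfl⟩)
    have hzspan : z ∈ Submodule.span ℝ (v '' (insert a T : Finset ι)) := by
      refine Submodule.span_mono (Set.image_mono ?_) (ih hz)
      intro i hi; simp only [Finset.coe_insert, Set.mem_insert_iff]; exact Or.inr hi
    exact Submodule.add_mem _ hyspan hzspan

theorem stmt1 (n : ℕ) (p : Fin (n + 1) → EuclideanSpace ℝ (Fin n)) :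
    mixedVol (n + 1) (fun i =>
        segment ℝ (emb n (n + 1) (p i)) (EuclideanSpace.single (Fin.last n) 1)) =
      |(Matrix.of fun i j : Fin (n + 1) =>
          Fin.cases (1 : ℝ) (fun k => p j k) i).det| := by
  classical
  set M : Matrix (Fin (n + 1)) (Fin (n + 1)) ℝ :=
    Matrix.of fun i j : Fin (n + 1) => Fin.cases (1 : ℝ) (fun k => p j k) i with hM
  set e : EuclideanSpace ℝ (Fin (n + 1)) := EuclideanSpace.single (Fin.last n) 1 with he
  set q : Fin (n + 1) → EuclideanSpace ℝ (Fin (n + 1)) := fun i => emb n (n + 1) (p i) with hq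
  set v : Fin (n + 1) → EuclideanSpace ℝ (Fin (n + 1)) := fun i => q i - e with hv
  -- segments as translates
  have hseg : ∀ i, segment ℝ (q i) e = {e} + segment ℝ 0 (v i) := by
    intro i
    rw [Set.singleton_add, segment_translate_image]
    simp only [hv, add_zero, add_sub_cancel]
    exact segment_symm ℝ _ _
  -- volume of sums of segments
  have hvolsum : ∀ S : Finset (Fin (n + 1)),
      volume (∑ i ∈ S, segment ℝ (q i) e) = volume (∑ i ∈ S, segment ℝ 0 (v i)) := by
    intro S
    have h1 : (∑ i ∈ S, segment ℝ (q i) e)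
        = {(S.card • e : EuclideanSpace ℝ (Fin (n + 1)))} + ∑ i ∈ S, segment ℝ 0 (v i) := by
      calc ∑ i ∈ S, segment ℝ (q i) e
          = ∑ i ∈ S, ({e} + segment ℝ 0 (v i)) := by simp_rw [hseg]
        _ = (∑ i ∈ S, ({e} : Set (EuclideanSpace ℝ (Fin (n + 1)))))
              + ∑ i ∈ S, segment ℝ 0 (v i) := Finset.sum_add_distrib
        _ = _ := by rw [Set.finset_sum_singleton]; simp
    rw [h1, Set.singleton_add, Set.image_add_left, measure_preimage_add]
  -- vanishing for proper subsets
  have hzero : ∀ S : Finset (Fin (n + 1)), S ≠ Finset.univ →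
      volume (∑ i ∈ S, segment ℝ 0 (v i)) = 0 := by
    intro S hS
    have hsub := sum_segment_subset_span v S
    have himg : v '' S = ((S.image v : Finset _) : Set (EuclideanSpace ℝ (Fin (n + 1)))) := by
      simp [Finset.coe_image]
    rw [himg] at hsub
    have hne : Submodule.span ℝ ((S.image v : Finset _) :
        Set (EuclideanSpace ℝ (Fin (n + 1)))) ≠ ⊤ := by
      intro htop
      have h1 : Module.finrank ℝ (Submodule.span ℝ ((S.image v : Finset _) :
          Set (EuclideanSpace ℝ (Fin (n + 1))))) ≤ S.card :=
        le_trans (finrank_span_finset_le_card _) (Finset.card_image_le)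
      rw [htop] at h1
      have h2 : Module.finrank ℝ (⊤ : Submodule ℝ (EuclideanSpace ℝ (Fin (n + 1)))) = n + 1 := by
        rw [finrank_top]; exact finrank_euclideanSpace_fin
      have h3 : S.card < n + 1 := by
        have := Finset.card_le_univ S
        rcases lt_or_eq_of_le this with h | h
        · simpa using h
        · exact absurd (Finset.eq_univ_of_card S (by simpa using h)) hS
      omega
    exact measure_mono_null hsub (Measure.addHaar_submodule volume _ hne)
  -- determinant identity
  have hdet : |(Matrix.of fun i j => v j i :
      Matrix (Fin (n + 1)) (Fin (n + 1)) ℝ).det| = |M.det| := by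
    have hA : (Matrix.of fun i j => v j i : Matrix (Fin (n + 1)) (Fin (n + 1)) ℝ) =
        (Matrix.diagonal fun j : Fin (n + 1) => if (j : ℕ) < n then (1 : ℝ) else -1) *
          M.submatrix (finRotate (n + 1)) id := by
      ext i j
      rw [Matrix.diagonal_mul]
      by_cases h : (i : ℕ) < n
      · have hne : i ≠ Fin.last n := by
          intro hh; rw [hh] at h; simp at h
        have hσ : finRotate (n + 1) i = Fin.succ ⟨(i : ℕ), h⟩ := by
          apply Fin.ext
          rw [coe_finRotate]
          simp [hne]
        simp only [Matrix.submatrix_apply, id_eq, hσ, hM, Matrix.of_apply, Fin.cases_succ,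
          if_pos h, one_mul]
        simp only [hv, hq, he]
        simp [emb, EuclideanSpace.single_apply, h, hne, PiLp.sub_apply]
      · have hi : i = Fin.last n := by
          apply Fin.ext; have := i.isLt; simp only [Fin.val_last]; omega
        subst hi
        simp only [Matrix.submatrix_apply, id_eq, finRotate_last, hM, Matrix.of_apply,
          Fin.cases_zero, if_neg h]
        simp only [hv, hq, he]
        simp [emb, EuclideanSpace.single_apply, PiLp.sub_apply]
    have hDdet : (Matrix.diagonal fun j : Fin (n + 1) =>
        if (j : ℕ) < n then (1 : ℝ) else -1).det = -1 := by
      rw [Matrix.det_diagonal, Fin.prod_univ_castSucc]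
      have h1 : ∀ j : Fin n, (if ((Fin.castSucc j : Fin (n + 1)) : ℕ) < n
          then (1 : ℝ) else -1) = 1 := by
        intro j; simp [j.isLt]
      simp [h1]
    rw [hA, Matrix.det_mul, hDdet, Matrix.det_permute]
    rw [sign_finRotate]
    push_cast
    simp [abs_mul, abs_pow]
  -- volume for the full set
  have huniv : volume (∑ i, segment ℝ 0 (v i)) = ENNReal.ofReal |M.det| := by
    rw [← parallelepiped_eq_sum_segment v,
      ← (EuclideanSpace.basisFun (Fin (n + 1)) ℝ).addHaar_eq_volume,
      Measure.addHaar_parallelepiped, Module.Basis.det_apply]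
    rw [show ((EuclideanSpace.basisFun (Fin (n + 1)) ℝ).toBasis.toMatrix v)
      = (Matrix.of fun i j => v j i : Matrix (Fin (n + 1)) (Fin (n + 1)) ℝ) from rfl]
    rw [hdet]
  -- assemble
  show (∑ S : Finset (Fin (n + 1)),
      (-1 : ℝ) ^ (n + 1 - S.card) * (volume (∑ i ∈ S, segment ℝ (q i) e)).toReal) = |M.det|
  rw [Finset.sum_eq_single Finset.univ]
  · rw [hvolsum, huniv]
    simp [ENNReal.toReal_ofReal (abs_nonneg _)]
  · intro S _ hS
    rw [hvolsum, hzero S hS]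
    simp
  · intro h; exact absurd (Finset.mem_univ _) h
end

section
/- If there exist line segments Lᵢ ⊂ Δ(pᵢ), i = 1,…,m, with linearly independent direction vectors in ℝ^m, where Δ(p) = conv{(p,0), e_{n+1},…,e_m}, then the points p₁,…,p_m affinely span ℝⁿ, i.e., conv{p₁,…,p_m} is full-dimensional. -/
open MeasureTheory Pointwise RealInnerProductSpace

theorem stmt7 (n m : ℕ) (hn : 0 < n) (hm : n < m)
    (p : Fin m → EuclideanSpace ℝ (Fin n))
    (u v : Fin m → EuclideanSpace ℝ (Fin m))
    (hseg : ∀ i, segment ℝ (u i) (v i) ⊆ simplexOf n m (p i))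
    (hind : LinearIndependent ℝ (fun i => v i - u i)) :
    affineSpan ℝ (Set.range p) = ⊤ := by
  by_contra h
  have hmpos : 0 < m := hn.trans hm
  set i0 : Fin m := ⟨0, hmpos⟩ with hi0
  have : Nonempty (Fin m) := ⟨i0⟩
  rw [AffineSubspace.affineSpan_eq_top_iff_vectorSpan_eq_top_of_nonempty ℝ _ _
    (Set.range_nonempty _)] at h
  have hV : (vectorSpan ℝ (Set.range p))ᗮ ≠ ⊥ :=
    fun hb => h (Submodule.orthogonal_eq_bot_iff.mp hb)
  obtain ⟨w, hwmem, hw0⟩ := Submodule.exists_mem_ne_zero_of_ne_bot hV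
  set c : ℝ := ⟪w, p i0⟫ with hc
  have hpc : ∀ i, ⟪w, p i⟫ = c := by
    intro i
    have hv : p i -ᵥ p i0 ∈ vectorSpan ℝ (Set.range p) :=
      vsub_mem_vectorSpan ℝ (Set.mem_range_self i) (Set.mem_range_self i0)
    have h2 := (Submodule.mem_orthogonal _ w).mp hwmem _ hv
    rw [real_inner_comm, vsub_eq_sub, inner_sub_right, sub_eq_zero] at h2
    exact h2
  set W : EuclideanSpace ℝ (Fin m) := WithLp.toLp 2 (fun j => if h : (j : ℕ) < n then w ⟨j, h⟩ else c) with hW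
  -- inner of W with the embedded point
  have hinner_emb : ∀ q : EuclideanSpace ℝ (Fin n), ⟪W, emb n m q⟫ = ⟪w, q⟫ := by
    intro q
    rw [PiLp.inner_apply, PiLp.inner_apply]
    have hsub : (Finset.univ : Finset (Fin n)).map (Fin.castLEEmb hm.le) ⊆
        (Finset.univ : Finset (Fin m)) := Finset.subset_univ _
    rw [← Finset.sum_subset hsub, Finset.sum_map]
    · apply Finset.sum_congr rfl
      intro k _
      simp [hW, emb, Fin.castLEEmb, Fin.castLE, k.isLt]
    · intro j _ hj
      have hjn : ¬ ((j : ℕ) < n) := by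
        intro hlt
        apply hj
        simp only [Finset.mem_map, Finset.mem_univ, true_and]
        exact ⟨⟨(j : ℕ), hlt⟩, by simp [Fin.castLEEmb, Fin.ext_iff]⟩
      simp only [emb, dif_neg hjn]
      norm_num
  have hvert : ∀ i, ∀ x ∈ insert (emb n m (p i))
      {x | ∃ j : Fin m, n ≤ (j : ℕ) ∧ x = EuclideanSpace.single j 1}, ⟪W, x⟫ = c := by
    rintro i x (rfl | ⟨j, hj, rfl⟩)
    · rw [hinner_emb, hpc]
    · rw [real_inner_comm, EuclideanSpace.inner_single_left]
      simp only [hW, map_one, one_mul]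
      rw [dif_neg (by omega)]
  have hsimp : ∀ i, ∀ x ∈ simplexOf n m (p i), ⟪W, x⟫ = c := by
    intro i
    have hconv : Convex ℝ {x : EuclideanSpace ℝ (Fin m) | ⟪W, x⟫ = c} := by
      intro x hx y hy a b ha hb hab
      simp only [Set.mem_setOf_eq] at hx hy ⊢
      rw [inner_add_right, real_inner_smul_right, real_inner_smul_right, hx, hy]
      rw [← add_mul, hab, one_mul]
    exact fun x hx => convexHull_min (fun y hy => hvert i y hy) hconv hx
  have hker : ∀ i, ⟪W, v i - u i⟫ = 0 := by
    intro i
    rw [inner_sub_right,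
      hsimp i _ (hseg i (right_mem_segment ℝ _ _)),
      hsimp i _ (hseg i (left_mem_segment ℝ _ _)), sub_self]
  -- span is top
  have hspan : Submodule.span ℝ (Set.range fun i => v i - u i) = ⊤ :=
    hind.span_eq_top_of_card_eq_finrank (by simp [finrank_euclideanSpace_fin])
  have hWzero : W = 0 := by
    have hle : Submodule.span ℝ (Set.range fun i => v i - u i) ≤
        LinearMap.ker (innerSL ℝ W).toLinearMap := by
      rw [Submodule.span_le]
      rintro x ⟨i, rfl⟩
      exact hker i
    have hWW : ⟪W, W⟫ = 0 := by
      have : W ∈ LinearMap.ker (innerSL ℝ W).toLinearMap :=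
        hle (hspan ▸ Submodule.mem_top)
      exact this
    exact inner_self_eq_zero.mp hWW
  apply hw0
  ext k
  have : W ⟨(k : ℕ), k.isLt.trans hm⟩ = 0 := by rw [hWzero]; rfl
  simpa [hW, dif_pos k.isLt] using this
end

section
/- The quantity MV(Δ(p₁),…,Δ(p_m)), viewed as a function of (p₁,…,p_m) ∈ (ℝⁿ)^m, is homogeneous of degree n under uniform scaling: MV(Δ(λp₁),…,Δ(λp_m)) = λⁿ · MV(Δ(p₁),…,Δ(p_m)) for all λ > 0. -/
open MeasureTheory Pointwise

noncomputable def Tmap (n m : ℕ) (lam : ℝ) :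
    EuclideanSpace ℝ (Fin m) →ₗ[ℝ] EuclideanSpace ℝ (Fin m) where
  toFun x := WithLp.toLp 2 (fun i : Fin m => if (i : ℕ) < n then lam * x i else x i)
  map_add' x y := by
    ext i
    by_cases h : (i : ℕ) < n <;> simp [h, mul_add, PiLp.add_apply]
  map_smul' c x := by
    ext i
    by_cases h : (i : ℕ) < n <;> simp [h, PiLp.smul_apply, smul_eq_mul] <;> ring

lemma Tmap_det (n m : ℕ) (hnm : n ≤ m) (lam : ℝ) :
    LinearMap.det (Tmap n m lam) = lam ^ n := by
  classical
  let b := (EuclideanSpace.basisFun (Fin m) ℝ).toBasis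
  rw [← LinearMap.det_toMatrix b]
  have hmat : LinearMap.toMatrix b b (Tmap n m lam) =
      Matrix.diagonal (fun i : Fin m => if (i : ℕ) < n then lam else 1) := by
    ext i j
    simp only [LinearMap.toMatrix_apply, b, OrthonormalBasis.coe_toBasis_repr_apply,
      EuclideanSpace.basisFun_repr, OrthonormalBasis.coe_toBasis, EuclideanSpace.basisFun_apply]
    show (if (i : ℕ) < n then lam * (EuclideanSpace.single j 1) i
        else (EuclideanSpace.single j 1) i) = _
    rcases eq_or_ne i j with rfl | hij
    · simp [Matrix.diagonal, EuclideanSpace.single_apply]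
    · simp [Matrix.diagonal_apply_ne _ hij, EuclideanSpace.single_apply, hij]
  rw [hmat, Matrix.det_diagonal, Finset.prod_ite, Finset.prod_const, Finset.prod_const, one_pow,
    mul_one]
  congr 1
  have : (Finset.univ.filter fun i : Fin m => (i : ℕ) < n) =
      Finset.map ⟨Fin.castLE hnm, Fin.castLE_injective hnm⟩ Finset.univ := by
    ext i
    simp only [Finset.mem_filter, Finset.mem_univ, true_and, Finset.mem_map,
      Function.Embedding.coeFn_mk]
    constructor
    · intro hi; exact ⟨⟨i, hi⟩, by first | exact ⟨Finset.mem_univ _, rfl⟩ | rfl⟩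
    · rintro ⟨j, hj⟩
      first
      | (obtain ⟨-, rfl⟩ := hj; exact j.isLt)
      | (subst hj; exact j.isLt)
  rw [this, Finset.card_map, Finset.card_univ, Fintype.card_fin]

lemma Tmap_image_simplex (n m : ℕ) (lam : ℝ) (q : EuclideanSpace ℝ (Fin n)) :
    (Tmap n m lam) '' simplexOf n m q = simplexOf n m (lam • q) := by
  rw [simplexOf, LinearMap.image_convexHull, simplexOf]
  congr 1
  rw [Set.image_insert_eq]
  have h1 : Tmap n m lam (emb n m q) = emb n m (lam • q) := by
    ext i
    show (if (i : ℕ) < n then lam * (emb n m q) i else (emb n m q) i) = _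
    unfold emb
    by_cases h : (i : ℕ) < n <;> simp [h, PiLp.smul_apply, smul_eq_mul]
  have h2 : ∀ x ∈ {x : EuclideanSpace ℝ (Fin m) |
      ∃ j : Fin m, n ≤ (j : ℕ) ∧ x = EuclideanSpace.single j 1}, Tmap n m lam x = x := by
    rintro x ⟨j, hj, rfl⟩
    ext i
    show (if (i : ℕ) < n then lam * (EuclideanSpace.single j 1) i
        else (EuclideanSpace.single j 1) i) = _
    by_cases h : (i : ℕ) < n
    · have hij : i ≠ j := by rintro rfl; omega
      simp [h, EuclideanSpace.single_apply, hij]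
    · simp [h]
  rw [h1]
  congr 1
  apply Set.ext
  intro x
  constructor
  · rintro ⟨y, hy, rfl⟩; rwa [h2 y hy]
  · intro hx; exact ⟨x, hx, h2 x hx⟩

theorem stmt9 (n m : ℕ) (hn : 0 < n) (hm : n < m)
    (p : Fin m → EuclideanSpace ℝ (Fin n)) (lam : ℝ) (hlam : 0 < lam) :
    mixedVol m (fun i => simplexOf n m (lam • p i)) =
      lam ^ n * mixedVol m (fun i => simplexOf n m (p i)) := by
  unfold mixedVol
  rw [Finset.mul_sum]
  apply Finset.sum_congr rfl
  intro S _
  have key : (∑ i ∈ S, simplexOf n m (lam • p i)) =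
      (Tmap n m lam) '' (∑ i ∈ S, simplexOf n m (p i)) := by
    rw [Set.image_finset_sum (Tmap n m lam) S (fun i => simplexOf n m (p i))]
    exact Finset.sum_congr rfl fun i _ => (Tmap_image_simplex n m lam (p i)).symm
  rw [key, Measure.addHaar_image_linearMap, Tmap_det n m hm.le, abs_of_pos (pow_pos hlam n),
    ENNReal.toReal_mul, ENNReal.toReal_ofReal (pow_pos hlam n).le]
  ring
end
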